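/- Let F be a field and let A ⊆ F be a finite additive subgroup of F. Then the polynomial f(X) = ∏_{a ∈ A} (X + a) ∈ F[X] is additive, i.e., the polynomial identity f(X + Y) = f(X) + f(Y) holds in the polynomial ring F[X, Y]. -/
import Mathlib


open MvPolynomial

private lemma aux_aeval_prod {F : Type*} [CommSemiring F] {T : Type*} [CommRing T]
    [Algebra F T] (s : Finset F) (t : T) :
    Polynomial.aeval t (∏ a ∈ s, (Polynomial.X + Polynomial.C a)) =
      ∏ a ∈ s, (t + algebraMap F T a) := by
  rw [map_prod]; simp

private lemma aux_translate {F : Type*} [Field F] (A : AddSubgroup F)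
    (hA : (A : Set F).Finite) {M : Type*} [CommMonoid M] (g : F → M) {a : F} (ha : a ∈ A) :
    (∏ b ∈ hA.toFinset, g (a + b)) = ∏ b ∈ hA.toFinset, g b := by
  refine Finset.prod_nbij' (fun b => a + b) (fun c => c - a) ?_ ?_ ?_ ?_ ?_ <;>
    intros b hb <;> simp_all [A.add_mem, A.sub_mem, sub_eq_iff_eq_add]

/-- Lemma 2.2 of Hartmann–Shepler, "Jacobians of reflection groups".
Let `F` be a field and `A ⊆ F` a finite additive subgroup.  Then the polynomial
`f(X) = ∏_{a ∈ A} (X + a)` is additive: the identity `f(X + Y) = f(X) + f(Y)`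
holds in the polynomial ring `F[X, Y]` (realized here as `MvPolynomial (Fin 2) F`,
with `X = X 0` and `Y = X 1`). -/
theorem prod_X_add_mem_finite_addSubgroup_isAdditive {F : Type*} [Field F]
    (A : AddSubgroup F) (hA : (A : Set F).Finite)
    (f : Polynomial F) (hf : f = ∏ a ∈ hA.toFinset, (Polynomial.X + Polynomial.C a)) :
    Polynomial.aeval (X 0 + X 1 : MvPolynomial (Fin 2) F) f =
      Polynomial.aeval (X 0 : MvPolynomial (Fin 2) F) f +
        Polynomial.aeval (X 1 : MvPolynomial (Fin 2) F) f := by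
  classical
  set s := hA.toFinset with hs
  have hmem : ∀ a : F, a ∈ s ↔ a ∈ A := by intro a; simp [hs]
  have h0 : (0 : F) ∈ s := (hmem 0).2 A.zero_mem
  have hcard : 0 < s.card := Finset.card_pos.2 ⟨0, h0⟩
  -- generic evaluation formula
  -- work in F[X][Y] = Polynomial (Polynomial F)
  set u : Polynomial (Polynomial F) := Polynomial.C Polynomial.X with hu
  set v : Polynomial (Polynomial F) := Polynomial.X with hv
  set M1 : Polynomial (Polynomial F) :=
    ∏ a ∈ s, (Polynomial.X + Polynomial.C (Polynomial.X + Polynomial.C a)) with hM1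
  set M2 : Polynomial (Polynomial F) :=
    ∏ a ∈ s, (Polynomial.X + Polynomial.C (Polynomial.C a)) with hM2
  set M3 : Polynomial (Polynomial F) :=
    Polynomial.C (∏ a ∈ s, (Polynomial.X + Polynomial.C a)) with hM3
  have halg : ∀ a : F, algebraMap F (Polynomial (Polynomial F)) a
      = Polynomial.C (Polynomial.C a) := fun a => rfl
  have e1 : Polynomial.aeval (u + v) f = M1 := by
    rw [hf, aux_aeval_prod, hM1]
    refine Finset.prod_congr rfl fun a _ => ?_
    rw [halg, hu, hv, map_add]; ring
  have e2 : Polynomial.aeval v f = M2 := by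
    rw [hf, aux_aeval_prod, hM2]
    refine Finset.prod_congr rfl fun a _ => ?_
    rw [halg]
  have e3 : Polynomial.aeval u f = M3 := by
    rw [hf, aux_aeval_prod, hM3, map_prod]
    refine Finset.prod_congr rfl fun a _ => ?_
    rw [halg, hu, map_add]
  -- degree bounds
  have hmon1 : M1.Monic :=
    Polynomial.monic_prod_of_monic _ _ fun a _ => Polynomial.monic_X_add_C _
  have hmon2 : M2.Monic :=
    Polynomial.monic_prod_of_monic _ _ fun a _ => Polynomial.monic_X_add_C _
  have hd1 : M1.natDegree = s.card := by
    rw [hM1, Polynomial.natDegree_prod _ _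
      (fun a _ => (Polynomial.monic_X_add_C _).ne_zero),
      Finset.sum_congr rfl (fun a _ => Polynomial.natDegree_X_add_C
        (Polynomial.X + Polynomial.C a)), Finset.sum_const, smul_eq_mul, mul_one]
  have hd2 : M2.natDegree = s.card := by
    rw [hM2, Polynomial.natDegree_prod _ _
      (fun a _ => (Polynomial.monic_X_add_C _).ne_zero),
      Finset.sum_congr rfl (fun a _ => Polynomial.natDegree_X_add_C
        (Polynomial.C a)), Finset.sum_const, smul_eq_mul, mul_one]
  -- the difference polynomial
  set P : Polynomial (Polynomial F) := M1 - M2 - M3 with hP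
  have hdegP : P.degree < (s.card : ℕ) := by
    have h12 : (M1 - M2).degree < (s.card : ℕ) := by
      rcases eq_or_ne M1 M2 with h | h
      · rw [h, sub_self, Polynomial.degree_zero]
        exact_mod_cast WithBot.bot_lt_coe s.card
      · have hdeq : M1.degree = M2.degree := by
          rw [Polynomial.degree_eq_natDegree hmon1.ne_zero,
            Polynomial.degree_eq_natDegree hmon2.ne_zero, hd1, hd2]
        have := Polynomial.degree_sub_lt hdeq hmon1.ne_zero
          (hmon1.leadingCoeff.trans hmon2.leadingCoeff.symm)
        rwa [Polynomial.degree_eq_natDegree hmon1.ne_zero, hd1] at this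
    have h3 : M3.degree < (s.card : ℕ) :=
      lt_of_le_of_lt (Polynomial.degree_C_le) (by exact_mod_cast hcard)
    exact lt_of_le_of_lt (Polynomial.degree_sub_le _ _) (max_lt h12 h3)
  -- P vanishes at C a for every a ∈ A
  have hroot : ∀ a ∈ s, P.eval (Polynomial.C a) = 0 := by
    intro a ha
    have haA : a ∈ A := (hmem a).1 ha
    have r1 : M1.eval (Polynomial.C a) = ∏ b ∈ s, (Polynomial.X + Polynomial.C b) := by
      rw [hM1, Polynomial.eval_prod]
      refine (Finset.prod_congr rfl fun b _ => ?_).trans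
        (aux_translate A hA (fun b => Polynomial.X + Polynomial.C b) haA)
      show Polynomial.eval (Polynomial.C a)
          (Polynomial.X + Polynomial.C (Polynomial.X + Polynomial.C b))
        = Polynomial.X + Polynomial.C (a + b)
      simp only [Polynomial.eval_add, Polynomial.eval_X, Polynomial.eval_C, map_add]
      ring
    have r2 : M2.eval (Polynomial.C a) = 0 := by
      rw [hM2, Polynomial.eval_prod]
      refine Finset.prod_eq_zero ((hmem (-a)).2 (A.neg_mem haA)) ?_
      simp [← Polynomial.C_add]
    have r3 : M3.eval (Polynomial.C a) = ∏ b ∈ s, (Polynomial.X + Polynomial.C b) := by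
      rw [hM3, Polynomial.eval_C]
    rw [hP]
    simp [r1, r2, r3]
  -- hence P = 0
  have hPzero : P = 0 := by
    rcases eq_or_ne P 0 with h | h
    · exact h
    · refine Polynomial.eq_zero_of_natDegree_lt_card_of_eval_eq_zero' P
        (s.image Polynomial.C) ?_ ?_
      · intro i hi
        obtain ⟨a, ha, rfl⟩ := Finset.mem_image.1 hi
        exact hroot a ha
      · rw [Finset.card_image_of_injective _ Polynomial.C_injective]
        exact (Polynomial.natDegree_lt_iff_degree_lt h).2 hdegP
  have key : Polynomial.aeval (u + v) f = Polynomial.aeval u f + Polynomial.aeval v f := by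
    rw [e1, e2, e3]
    have : M1 - M2 - M3 = 0 := hPzero
    linear_combination this
  -- transfer to MvPolynomial via the tower evaluation hom
  set χ : Polynomial (Polynomial F) →ₐ[F] MvPolynomial (Fin 2) F :=
    Polynomial.aevalTower (Polynomial.aeval (X 0 : MvPolynomial (Fin 2) F)) (X 1) with hχ
  have hχu : χ u = X 0 := by rw [hu, hχ, Polynomial.aevalTower_C, Polynomial.aeval_X]
  have hχv : χ v = X 1 := by rw [hv, hχ, Polynomial.aevalTower_X]
  have hχuv : χ (u + v) = X 0 + X 1 := by rw [map_add, hχu, hχv]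
  have p0 := Polynomial.aeval_algHom_apply χ (u + v) f
  have p1 := Polynomial.aeval_algHom_apply χ u f
  have p2 := Polynomial.aeval_algHom_apply χ v f
  rw [hχuv] at p0
  rw [hχu] at p1
  rw [hχv] at p2
  rw [p0, key, map_add, ← p1, ← p2]
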